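/- Let A be an n×n Hermitian matrix and W an n×n nonsingular matrix. For each k = 1,...,n (with eigenvalues of A and of W W* arranged in increasing order), there exists θ_k with λ_min(W W*) ≤ θ_k ≤ λ_max(W W*) such that λ_k(W A W*) = θ_k · λ_k(A). -/

import Mathlib

open Matrix Module Submodule Finset

namespace OstrAux

variable {n : ℕ} {H : Matrix (Fin n) (Fin n) ℂ}

noncomputable section

lemma toEuclideanLin_eigen (hH : H.IsHermitian) (i : Fin n) :
    toEuclideanLin H (hH.eigenvectorBasis i) =
      (hH.eigenvalues i : ℂ) • hH.eigenvectorBasis i := by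
  have h := hH.mulVec_eigenvectorBasis i
  apply (WithLp.equiv 2 (Fin n → ℂ)).injective
  simp only [WithLp.equiv_apply, Matrix.ofLp_toEuclideanLin_apply]
  rw [h]
  ext j
  simp [Complex.real_smul]

lemma repr_toEuclideanLin (hH : H.IsHermitian) (x : EuclideanSpace ℂ (Fin n)) (i : Fin n) :
    hH.eigenvectorBasis.repr (toEuclideanLin H x) i
      = (hH.eigenvalues i : ℂ) * hH.eigenvectorBasis.repr x i := by
  simp only [OrthonormalBasis.repr_apply_apply]
  have hadj : LinearMap.adjoint (toEuclideanLin H) = toEuclideanLin H := by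
    rw [← Matrix.toEuclideanLin_conjTranspose_eq_adjoint, hH.eq]
  calc inner ℂ (hH.eigenvectorBasis i) (toEuclideanLin H x)
      = inner ℂ (LinearMap.adjoint (toEuclideanLin H) (hH.eigenvectorBasis i)) x := by
        rw [LinearMap.adjoint_inner_left]
    _ = inner ℂ ((hH.eigenvalues i : ℂ) • hH.eigenvectorBasis i) x := by
        rw [hadj, toEuclideanLin_eigen]
    _ = (hH.eigenvalues i : ℂ) * inner ℂ (hH.eigenvectorBasis i) x := by
        rw [inner_smul_left]; simp

lemma re_inner_toEuclideanLin (hH : H.IsHermitian) (x : EuclideanSpace ℂ (Fin n)) :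
    RCLike.re (inner ℂ x (toEuclideanLin H x) : ℂ)
      = ∑ i, hH.eigenvalues i * ‖hH.eigenvectorBasis.repr x i‖^2 := by
  set b := hH.eigenvectorBasis
  have h : (inner ℂ x (toEuclideanLin H x) : ℂ)
      = inner ℂ (b.repr x) (b.repr (toEuclideanLin H x)) := by
    rw [b.repr.inner_map_map]
  rw [h, PiLp.inner_apply]
  rw [map_sum]
  refine Finset.sum_congr rfl fun i _ => ?_
  rw [repr_toEuclideanLin hH]
  simp only [RCLike.inner_apply]
  rw [show (hH.eigenvalues i : ℂ) * b.repr x i * (starRingEnd ℂ) (b.repr x i)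
      = (hH.eigenvalues i : ℂ) * ((starRingEnd ℂ) (b.repr x i) * b.repr x i) by ring]
  rw [RCLike.conj_mul]
  simp [← Complex.ofReal_pow]

lemma norm_sq_eq_sum_repr (b : OrthonormalBasis (Fin n) ℂ (EuclideanSpace ℂ (Fin n)))
    (x : EuclideanSpace ℂ (Fin n)) : ‖x‖^2 = ∑ i, ‖b.repr x i‖^2 := by
  rw [← b.repr.norm_map x, EuclideanSpace.norm_eq, Real.sq_sqrt]
  positivity

lemma repr_eq_zero_of_mem_span (b : OrthonormalBasis (Fin n) ℂ (EuclideanSpace ℂ (Fin n)))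
    {s : Finset (Fin n)} {x : EuclideanSpace ℂ (Fin n)}
    (hx : x ∈ Submodule.span ℂ (⇑b '' ↑s)) {j : Fin n} (hj : j ∉ s) : b.repr x j = 0 := by
  induction hx using Submodule.span_induction with
  | mem y hy =>
    obtain ⟨i, hi, rfl⟩ := hy
    rw [b.repr_self, EuclideanSpace.single_apply]
    simp only [ite_eq_right_iff]
    intro h; exact absurd (h ▸ hi) hj
  | zero => simp
  | add y z _ _ hy hz => simp [map_add, hy, hz]
  | smul c y _ hy => simp [_root_.map_smul, hy]

lemma finrank_span_image (b : OrthonormalBasis (Fin n) ℂ (EuclideanSpace ℂ (Fin n)))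
    (s : Finset (Fin n)) :
    finrank ℂ (Submodule.span ℂ (⇑b '' ↑s)) = s.card := by
  have hli : LinearIndependent ℂ (fun i : s => b i) :=
    (b.orthonormal.linearIndependent).comp _ Subtype.val_injective
  have hr : Set.range (fun i : s => b i) = ⇑b '' ↑s := by
    rw [show (fun i : s => b i) = ⇑b ∘ Subtype.val from rfl, Set.range_comp, Subtype.range_val]
  rw [← hr, finrank_span_eq_card hli, Fintype.card_coe]

lemma rayleigh_le_on_span (hH : H.IsHermitian) (t : ℝ) (s : Finset (Fin n))
    (hs : ∀ i ∈ s, hH.eigenvalues i ≤ t) {x : EuclideanSpace ℂ (Fin n)}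
    (hx : x ∈ Submodule.span ℂ (⇑hH.eigenvectorBasis '' ↑s)) :
    RCLike.re (inner ℂ x (toEuclideanLin H x) : ℂ) ≤ t * ‖x‖^2 := by
  rw [re_inner_toEuclideanLin hH, norm_sq_eq_sum_repr hH.eigenvectorBasis, Finset.mul_sum]
  refine Finset.sum_le_sum fun i _ => ?_
  by_cases hc : hH.eigenvectorBasis.repr x i = 0
  · simp [hc]
  · have hi : i ∈ s := by
      by_contra hi
      exact hc (repr_eq_zero_of_mem_span hH.eigenvectorBasis hx hi)
    exact mul_le_mul_of_nonneg_right (hs i hi) (sq_nonneg _)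

lemma rayleigh_ge_on_span (hH : H.IsHermitian) (t : ℝ) (s : Finset (Fin n))
    (hs : ∀ i ∈ s, t ≤ hH.eigenvalues i) {x : EuclideanSpace ℂ (Fin n)}
    (hx : x ∈ Submodule.span ℂ (⇑hH.eigenvectorBasis '' ↑s)) :
    t * ‖x‖^2 ≤ RCLike.re (inner ℂ x (toEuclideanLin H x) : ℂ) := by
  rw [re_inner_toEuclideanLin hH, norm_sq_eq_sum_repr hH.eigenvectorBasis, Finset.mul_sum]
  refine Finset.sum_le_sum fun i _ => ?_
  by_cases hc : hH.eigenvectorBasis.repr x i = 0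
  · simp [hc]
  · have hi : i ∈ s := by
      by_contra hi
      exact hc (repr_eq_zero_of_mem_span hH.eigenvectorBasis hx hi)
    exact mul_le_mul_of_nonneg_right (hs i hi) (sq_nonneg _)

lemma cf_upper (hH : H.IsHermitian) (μ : Fin n → ℝ) (σ : Equiv.Perm (Fin n))
    (hμ : μ = hH.eigenvalues ∘ σ) (hmono : Monotone μ) (k : Fin n)
    (S : Submodule ℂ (EuclideanSpace ℂ (Fin n))) (hdim : (k : ℕ) + 1 ≤ finrank ℂ S)
    (t : ℝ) (hS : ∀ x ∈ S, RCLike.re (inner ℂ x (toEuclideanLin H x) : ℂ) ≤ t * ‖x‖^2) :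
    μ k ≤ t := by
  classical
  set s : Finset (Fin n) := (Finset.Ici k).image σ with hs
  set T := Submodule.span ℂ (⇑hH.eigenvectorBasis '' ↑s) with hT
  have hTcard : finrank ℂ T = n - k := by
    rw [hT, finrank_span_image, hs, Finset.card_image_of_injective _ σ.injective, Fin.card_Ici]
  have hpos : 0 < finrank ℂ ↥(S ⊓ T) := by
    have hle : finrank ℂ ↥(S ⊔ T) ≤ n :=
      (Submodule.finrank_le _).trans_eq finrank_euclideanSpace_fin
    have heq := Submodule.finrank_sup_add_finrank_inf_eq S T
    have hk := k.isLt
    omega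
  have hne : S ⊓ T ≠ ⊥ := by
    intro h
    rw [h, finrank_bot] at hpos
    exact lt_irrefl 0 hpos
  obtain ⟨x, hxST, hx0⟩ := Submodule.exists_mem_ne_zero_of_ne_bot hne
  have h1 : μ k * ‖x‖^2 ≤ RCLike.re (inner ℂ x (toEuclideanLin H x) : ℂ) := by
    refine rayleigh_ge_on_span hH (μ k) s (fun i hi => ?_) hxST.2
    obtain ⟨j, hj, rfl⟩ := Finset.mem_image.mp hi
    simpa [hμ] using hmono (Finset.mem_Ici.mp hj)
  have h2 := hS x hxST.1
  have hx2 : 0 < ‖x‖^2 := pow_pos (norm_pos_iff.mpr hx0) 2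
  exact le_of_mul_le_mul_right (h1.trans h2) hx2

lemma cf_lower (hH : H.IsHermitian) (μ : Fin n → ℝ) (σ : Equiv.Perm (Fin n))
    (hμ : μ = hH.eigenvalues ∘ σ) (hmono : Monotone μ) (k : Fin n)
    (S : Submodule ℂ (EuclideanSpace ℂ (Fin n))) (hdim : n - (k : ℕ) ≤ finrank ℂ S)
    (t : ℝ) (hS : ∀ x ∈ S, t * ‖x‖^2 ≤ RCLike.re (inner ℂ x (toEuclideanLin H x) : ℂ)) :
    t ≤ μ k := by
  classical
  set s : Finset (Fin n) := (Finset.Iic k).image σ with hs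
  set T := Submodule.span ℂ (⇑hH.eigenvectorBasis '' ↑s) with hT
  have hTcard : finrank ℂ T = (k : ℕ) + 1 := by
    rw [hT, finrank_span_image, hs, Finset.card_image_of_injective _ σ.injective, Fin.card_Iic]
  have hpos : 0 < finrank ℂ ↥(S ⊓ T) := by
    have hle : finrank ℂ ↥(S ⊔ T) ≤ n :=
      (Submodule.finrank_le _).trans_eq finrank_euclideanSpace_fin
    have heq := Submodule.finrank_sup_add_finrank_inf_eq S T
    have hk := k.isLt
    omega
  have hne : S ⊓ T ≠ ⊥ := by
    intro h
    rw [h, finrank_bot] at hpos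
    exact lt_irrefl 0 hpos
  obtain ⟨x, hxST, hx0⟩ := Submodule.exists_mem_ne_zero_of_ne_bot hne
  have h1 : RCLike.re (inner ℂ x (toEuclideanLin H x) : ℂ) ≤ μ k * ‖x‖^2 := by
    refine rayleigh_le_on_span hH (μ k) s (fun i hi => ?_) hxST.2
    obtain ⟨j, hj, rfl⟩ := Finset.mem_image.mp hi
    simpa [hμ] using hmono (Finset.mem_Iic.mp hj)
  have h2 := hS x hxST.1
  have hx2 : 0 < ‖x‖^2 := pow_pos (norm_pos_iff.mpr hx0) 2
  exact le_of_mul_le_mul_right (h2.trans h1) hx2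

end

end OstrAux

open OstrAux Module

theorem ostrowski (n : ℕ) (hn : 0 < n) (A W : Matrix (Fin n) (Fin n) ℂ)
    (hA : A.IsHermitian) (hW : IsUnit W)
    (hWAW : (W * A * Wᴴ).IsHermitian) (hWW : (W * Wᴴ).IsHermitian)
    (μA μWAW : Fin n → ℝ) (hμA_mono : Monotone μA) (hμWAW_mono : Monotone μWAW)
    (hμA : ∃ σ : Equiv.Perm (Fin n), μA = hA.eigenvalues ∘ σ)
    (hμWAW : ∃ σ : Equiv.Perm (Fin n), μWAW = hWAW.eigenvalues ∘ σ) :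
    ∀ k : Fin n, ∃ θ : ℝ,
      (⨅ i, hWW.eigenvalues i) ≤ θ ∧ θ ≤ (⨆ i, hWW.eigenvalues i) ∧
      μWAW k = θ * μA k := by
  intro k
  classical
  obtain ⟨σA, hσA⟩ := hμA
  obtain ⟨σB, hσB⟩ := hμWAW
  haveI : Nonempty (Fin n) := ⟨⟨0, hn⟩⟩
  set m := ⨅ i, hWW.eigenvalues i with hm
  set M := ⨆ i, hWW.eigenvalues i with hM
  have hm_le : ∀ i, m ≤ hWW.eigenvalues i :=
    fun i => ciInf_le (Set.Finite.bddBelow (Set.finite_range _)) i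
  have hle_M : ∀ i, hWW.eigenvalues i ≤ M :=
    fun i => le_ciSup (Set.Finite.bddAbove (Set.finite_range _)) i
  have hmM : m ≤ M := (hm_le ⟨0, hn⟩).trans (hle_M ⟨0, hn⟩)
  have hdet : IsUnit (Wᴴ).det := by
    rw [Matrix.det_conjTranspose]
    exact ((Matrix.isUnit_iff_isUnit_det W).mp hW).star
  have hWH : Wᴴ * (Wᴴ)⁻¹ = 1 := Matrix.mul_nonsing_inv _ hdet
  have hWH' : (Wᴴ)⁻¹ * Wᴴ = 1 := Matrix.nonsing_inv_mul _ hdet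
  let e : EuclideanSpace ℂ (Fin n) ≃ₗ[ℂ] EuclideanSpace ℂ (Fin n) :=
    Matrix.toLinOfInv (PiLp.basisFun 2 ℂ (Fin n)) (PiLp.basisFun 2 ℂ (Fin n)) hWH hWH'
  have he : ∀ x, e x = toEuclideanLin Wᴴ x := fun x => rfl
  have hadj : LinearMap.adjoint (toEuclideanLin Wᴴ) = toEuclideanLin W := by
    rw [← Matrix.toEuclideanLin_conjTranspose_eq_adjoint, Matrix.conjTranspose_conjTranspose]
  have hBx : ∀ x : EuclideanSpace ℂ (Fin n), (inner ℂ x (toEuclideanLin (W * A * Wᴴ) x) : ℂ)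
      = inner ℂ (toEuclideanLin Wᴴ x) (toEuclideanLin A (toEuclideanLin Wᴴ x)) := by
    intro x
    have h1 : toEuclideanLin (W * A * Wᴴ) x
        = toEuclideanLin W (toEuclideanLin A (toEuclideanLin Wᴴ x)) := by
      rw [Matrix.toEuclideanLin_eq_toLin, Matrix.toLin_mul _ (PiLp.basisFun 2 ℂ (Fin n)) _,
        Matrix.toLin_mul _ (PiLp.basisFun 2 ℂ (Fin n)) _]
      rfl
    rw [h1, ← hadj, LinearMap.adjoint_inner_right]
  have hWWx : ∀ x : EuclideanSpace ℂ (Fin n), ‖toEuclideanLin Wᴴ x‖^2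
      = RCLike.re (inner ℂ x (toEuclideanLin (W * Wᴴ) x) : ℂ) := by
    intro x
    have h1 : toEuclideanLin (W * Wᴴ) x = toEuclideanLin W (toEuclideanLin Wᴴ x) := by
      rw [Matrix.toEuclideanLin_eq_toLin, Matrix.toLin_mul _ (PiLp.basisFun 2 ℂ (Fin n)) _]
      rfl
    rw [h1, ← hadj, LinearMap.adjoint_inner_right, inner_self_eq_norm_sq]
  have huniv : ∀ x : EuclideanSpace ℂ (Fin n),
      x ∈ Submodule.span ℂ (⇑hWW.eigenvectorBasis '' ↑(Finset.univ : Finset (Fin n))) := by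
    intro x
    rw [Finset.coe_univ, Set.image_univ, ← OrthonormalBasis.coe_toBasis, Basis.span_eq]
    trivial
  have hWWlb : ∀ x : EuclideanSpace ℂ (Fin n),
      m * ‖x‖^2 ≤ RCLike.re (inner ℂ x (toEuclideanLin (W * Wᴴ) x) : ℂ) :=
    fun x => rayleigh_ge_on_span hWW m Finset.univ (fun i _ => hm_le i) (huniv x)
  have hWWub : ∀ x : EuclideanSpace ℂ (Fin n),
      RCLike.re (inner ℂ x (toEuclideanLin (W * Wᴴ) x) : ℂ) ≤ M * ‖x‖^2 :=
    fun x => rayleigh_le_on_span hWW M Finset.univ (fun i _ => hle_M i) (huniv x)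
  have main_ub : ∀ c : ℝ,
      (∀ x : EuclideanSpace ℂ (Fin n), μA k * ‖toEuclideanLin Wᴴ x‖^2 ≤ c * ‖x‖^2) →
      μWAW k ≤ c := by
    intro c hc
    set sA : Finset (Fin n) := (Finset.Iic k).image σA with hsA
    set SA := Submodule.span ℂ (⇑hA.eigenvectorBasis '' ↑sA) with hSA
    set S : Submodule ℂ (EuclideanSpace ℂ (Fin n)) := Submodule.comap (↑e : EuclideanSpace ℂ (Fin n) →ₗ[ℂ] EuclideanSpace ℂ (Fin n)) SA with hS
    have hdimS : (k : ℕ) + 1 ≤ finrank ℂ S := by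
      rw [hS, Submodule.comap_equiv_eq_map_symm, LinearEquiv.finrank_map_eq, hSA,
        finrank_span_image, hsA, Finset.card_image_of_injective _ σA.injective, Fin.card_Iic]
    refine cf_upper hWAW μWAW σB hσB hμWAW_mono k S hdimS c ?_
    intro x hx
    have hmem : toEuclideanLin Wᴴ x ∈ SA := by
      have := Submodule.mem_comap.mp hx
      rw [LinearEquiv.coe_coe] at this
      rw [← he]
      exact this

    calc RCLike.re (inner ℂ x (toEuclideanLin (W * A * Wᴴ) x) : ℂ)
        = RCLike.re (inner ℂ (toEuclideanLin Wᴴ x) (toEuclideanLin A (toEuclideanLin Wᴴ x)) : ℂ) := by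
          rw [hBx]
      _ ≤ μA k * ‖toEuclideanLin Wᴴ x‖^2 := by
          refine rayleigh_le_on_span hA (μA k) sA (fun i hi => ?_) hmem
          obtain ⟨j, hj, rfl⟩ := Finset.mem_image.mp hi
          simpa [hσA] using hμA_mono (Finset.mem_Iic.mp hj)
      _ ≤ c * ‖x‖^2 := hc x
  have main_lb : ∀ c : ℝ,
      (∀ x : EuclideanSpace ℂ (Fin n), c * ‖x‖^2 ≤ μA k * ‖toEuclideanLin Wᴴ x‖^2) →
      c ≤ μWAW k := by
    intro c hc
    set sA : Finset (Fin n) := (Finset.Ici k).image σA with hsA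
    set SA := Submodule.span ℂ (⇑hA.eigenvectorBasis '' ↑sA) with hSA
    set S : Submodule ℂ (EuclideanSpace ℂ (Fin n)) := Submodule.comap (↑e : EuclideanSpace ℂ (Fin n) →ₗ[ℂ] EuclideanSpace ℂ (Fin n)) SA with hS
    have hdimS : n - (k : ℕ) ≤ finrank ℂ S := by
      rw [hS, Submodule.comap_equiv_eq_map_symm, LinearEquiv.finrank_map_eq, hSA,
        finrank_span_image, hsA, Finset.card_image_of_injective _ σA.injective, Fin.card_Ici]
    refine cf_lower hWAW μWAW σB hσB hμWAW_mono k S hdimS c ?_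
    intro x hx
    have hmem : toEuclideanLin Wᴴ x ∈ SA := by
      have := Submodule.mem_comap.mp hx
      rw [LinearEquiv.coe_coe] at this
      rw [← he]
      exact this

    calc c * ‖x‖^2 ≤ μA k * ‖toEuclideanLin Wᴴ x‖^2 := hc x
      _ ≤ RCLike.re (inner ℂ (toEuclideanLin Wᴴ x) (toEuclideanLin A (toEuclideanLin Wᴴ x)) : ℂ) := by
          refine rayleigh_ge_on_span hA (μA k) sA (fun i hi => ?_) hmem
          obtain ⟨j, hj, rfl⟩ := Finset.mem_image.mp hi
          simpa [hσA] using hμA_mono (Finset.mem_Ici.mp hj)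
      _ = RCLike.re (inner ℂ x (toEuclideanLin (W * A * Wᴴ) x) : ℂ) := by rw [hBx]
  rcases le_or_gt 0 (μA k) with hpos | hneg
  · have h1 : μWAW k ≤ μA k * M := by
      refine main_ub _ (fun x => ?_)
      rw [hWWx x]
      calc μA k * RCLike.re (inner ℂ x (toEuclideanLin (W * Wᴴ) x) : ℂ)
          ≤ μA k * (M * ‖x‖^2) := mul_le_mul_of_nonneg_left (hWWub x) hpos
        _ = (μA k * M) * ‖x‖^2 := by ring
    have h2 : μA k * m ≤ μWAW k := by
      refine main_lb _ (fun x => ?_)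
      rw [hWWx x]
      calc (μA k * m) * ‖x‖^2 = μA k * (m * ‖x‖^2) := by ring
        _ ≤ μA k * RCLike.re (inner ℂ x (toEuclideanLin (W * Wᴴ) x) : ℂ) :=
            mul_le_mul_of_nonneg_left (hWWlb x) hpos
    rcases eq_or_lt_of_le hpos with heq | hlt
    · refine ⟨m, le_refl m, hmM, ?_⟩
      have h0 : μWAW k = 0 := by
        rw [← heq] at h1 h2
        rw [zero_mul] at h1 h2
        exact le_antisymm h1 h2
      rw [h0, ← heq, mul_zero]
    · refine ⟨μWAW k / μA k, ?_, ?_, ?_⟩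
      · rw [le_div_iff₀ hlt]; nlinarith
      · rw [div_le_iff₀ hlt]; nlinarith
      · rw [div_mul_cancel₀ _ (ne_of_gt hlt)]
  · have hneg' : μA k ≤ 0 := le_of_lt hneg
    have h1 : μWAW k ≤ μA k * m := by
      refine main_ub _ (fun x => ?_)
      rw [hWWx x]
      calc μA k * RCLike.re (inner ℂ x (toEuclideanLin (W * Wᴴ) x) : ℂ)
          ≤ μA k * (m * ‖x‖^2) := mul_le_mul_of_nonpos_left (hWWlb x) hneg'
        _ = (μA k * m) * ‖x‖^2 := by ring
    have h2 : μA k * M ≤ μWAW k := by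
      refine main_lb _ (fun x => ?_)
      rw [hWWx x]
      calc (μA k * M) * ‖x‖^2 = μA k * (M * ‖x‖^2) := by ring
        _ ≤ μA k * RCLike.re (inner ℂ x (toEuclideanLin (W * Wᴴ) x) : ℂ) :=
            mul_le_mul_of_nonpos_left (hWWub x) hneg'
    refine ⟨μWAW k / μA k, ?_, ?_, ?_⟩
    · rw [le_div_iff_of_neg hneg]; nlinarith
    · rw [div_le_iff_of_neg hneg]; nlinarith
    · rw [div_mul_cancel₀ _ (ne_of_lt hneg)]
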